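/- Let a ≥ n ≥ 0 be integers and let d be a type-C partition of size 2n+2a with exactly 2a parts. Then: (i) ∇(d) is a type-D partition of size 2n; (ii) the B-collapse of d^+ has exactly 2a+1 parts; and (iii) ∇(B-collapse of d^+) equals the C-collapse of ((∇(d))^+)^-. -/

import Mathlib

/-!
Partitions (Young diagrams) are represented as antitone, eventually-zero
functions `f : ℕ → ℕ`, where `f i` is the length of the `(i+1)`-st row.
-/

/-- `f : ℕ → ℕ` represents a partition (Young diagram). -/
def IsPartition (f : ℕ → ℕ) : Prop :=
  Antitone f ∧ ∃ N, ∀ i, N ≤ i → f i = 0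

/-- The size of a partition: the sum of its parts. -/
noncomputable def size (f : ℕ → ℕ) : ℕ := ∑' i, f i

/-- The sum of the `k` largest parts of a partition. -/
def psum (f : ℕ → ℕ) (k : ℕ) : ℕ := ∑ i ∈ Finset.range k, f i

/-- The multiplicity with which `p` occurs as a part. -/
noncomputable def mult (f : ℕ → ℕ) (p : ℕ) : ℕ := {i | f i = p}.ncard

/-- The transpose (conjugate) partition: `transpose f i` is the length of the
`(i+1)`-st column of `f`. -/
noncomputable def transpose (f : ℕ → ℕ) : ℕ → ℕ := fun i => {j | i < f j}.ncard

/-- The number of parts of a partition (the length of its first column). -/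
noncomputable def numParts (f : ℕ → ℕ) : ℕ := {j | 0 < f j}.ncard

/-- Type B: odd size, and every (positive) even part occurs with even multiplicity. -/
def IsTypeB (f : ℕ → ℕ) : Prop :=
  IsPartition f ∧ Odd (size f) ∧ ∀ p, 0 < p → Even p → Even (mult f p)

/-- Type C: even size, and every odd part occurs with even multiplicity. -/
def IsTypeC (f : ℕ → ℕ) : Prop :=
  IsPartition f ∧ Even (size f) ∧ ∀ p, Odd p → Even (mult f p)

/-- Type D: even size, and every (positive) even part occurs with even multiplicity. -/
def IsTypeD (f : ℕ → ℕ) : Prop :=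
  IsPartition f ∧ Even (size f) ∧ ∀ p, 0 < p → Even p → Even (mult f p)

/-- Dominance order `f ≼ g` between partitions of the same size. -/
def Dom (f g : ℕ → ℕ) : Prop :=
  size f = size g ∧ ∀ k, psum f k ≤ psum g k

/-- `c` is the X-collapse of `d`, where predicate `T` expresses "type X": `c` is
the greatest type-X partition of the same size dominated by `d`. -/
def IsCollapse (T : (ℕ → ℕ) → Prop) (d c : ℕ → ℕ) : Prop :=
  T c ∧ Dom c d ∧ ∀ e, T e → Dom e d → Dom e c

open Classical in
/-- The X-collapse of `d` (junk value if it does not exist). -/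
noncomputable def collapse (T : (ℕ → ℕ) → Prop) (d : ℕ → ℕ) : ℕ → ℕ :=
  if h : ∃ c, IsCollapse T d c then h.choose else fun _ => 0

/-- The B-collapse. -/
noncomputable def collapseB : (ℕ → ℕ) → ℕ → ℕ := collapse IsTypeB

/-- The C-collapse. -/
noncomputable def collapseC : (ℕ → ℕ) → ℕ → ℕ := collapse IsTypeC

/-- The D-collapse. -/
noncomputable def collapseD : (ℕ → ℕ) → ℕ → ℕ := collapse IsTypeD

/-- `d⁺`: add one box to the first row. -/
def boxPlus (f : ℕ → ℕ) : ℕ → ℕ := fun i => if i = 0 then f 0 + 1 else f i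

/-- `d⁻`: remove one box from the last row (for nonempty `d`). -/
noncomputable def boxMinus (f : ℕ → ℕ) : ℕ → ℕ :=
  fun i => if i = numParts f - 1 then f i - 1 else f i

/-- `∇(d)`: remove the first column (every part decreased by 1). -/
def delCol (f : ℕ → ℕ) : ℕ → ℕ := fun i => f i - 1

/-- `∇̌(d)`: remove the first row (delete one largest part). -/
def delRow (f : ℕ → ℕ) : ℕ → ℕ := fun i => f (i + 1)

/-- The metaplectic Lusztig–Spaltenstein map: the D-collapse of the transpose. -/
noncomputable def mLS (d : ℕ → ℕ) : ℕ → ℕ := collapseD (transpose d)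

/-- The map `d̃_SP`: the C-collapse of `(e⁺)⁻`. -/
noncomputable def mSP (e : ℕ → ℕ) : ℕ → ℕ := collapseC (boxMinus (boxPlus e))

/-- The metaplectic Barbasch–Vogan duality. -/
noncomputable def mBV (d : ℕ → ℕ) : ℕ → ℕ := mSP (mLS d)

/-! ### Basic lemmas about `psum`, `size`, `numParts` -/

lemma psum_succ (f : ℕ → ℕ) (k : ℕ) : psum f (k + 1) = psum f k + f k :=
  Finset.sum_range_succ f k

lemma psum_mono (f : ℕ → ℕ) : Monotone (psum f) := fun _ _ h =>
  Finset.sum_le_sum_of_subset (Finset.range_subset_range.2 h)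

lemma size_eq_psum (f : ℕ → ℕ) (N : ℕ) (h : ∀ i, N ≤ i → f i = 0) :
    size f = psum f N := by
  refine tsum_eq_sum ?_
  intro b hb
  exact h b (by simpa [Finset.mem_range, Nat.not_lt] using hb)

lemma numParts_eq (f : ℕ → ℕ) (m : ℕ) (h1 : ∀ i, i < m → 0 < f i)
    (h2 : ∀ i, m ≤ i → f i = 0) : numParts f = m := by
  have hs : {j | 0 < f j} = ↑(Finset.range m) := by
    ext i
    simp only [Set.mem_setOf_eq, Finset.coe_range, Set.mem_Iio]
    constructor
    · intro hi
      by_contra hm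
      exact absurd (h2 i (Nat.le_of_not_lt hm)) (by omega)
    · exact h1 i
  rw [numParts, hs, Set.ncard_coe_finset, Finset.card_range]

lemma numParts_spec (f : ℕ → ℕ) (hf : IsPartition f) :
    (∀ i, i < numParts f → 0 < f i) ∧ (∀ i, numParts f ≤ i → f i = 0) := by
  obtain ⟨hA, N, hN⟩ := hf
  have hne : (0 : ℕ) ∈ {i | f i = 0} ∨ True := Or.inr trivial
  have hnonempty : {i | f i = 0}.Nonempty := ⟨N, hN N le_rfl⟩
  set m := sInf {i | f i = 0} with hm
  have hmem : f m = 0 := Nat.sInf_mem hnonempty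
  have hlt : ∀ i, i < m → 0 < f i := by
    intro i hi
    have : i ∉ {i | f i = 0} := Nat.notMem_of_lt_sInf hi
    exact Nat.pos_of_ne_zero this
  have hge : ∀ i, m ≤ i → f i = 0 := fun i hi => Nat.le_zero.1 (hmem ▸ hA hi)
  have := numParts_eq f m hlt hge
  rw [this]
  exact ⟨hlt, hge⟩

lemma numParts_le (f : ℕ → ℕ) (hf : IsPartition f) (m : ℕ)
    (h : ∀ i, m ≤ i → f i = 0) : numParts f ≤ m := by
  by_contra hc
  have := (numParts_spec f hf).1 m (by omega)
  rw [h m le_rfl] at this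
  omega

lemma size_eq_psum_of_numParts (f : ℕ → ℕ) (hf : IsPartition f) (N : ℕ)
    (h : numParts f ≤ N) : size f = psum f N :=
  size_eq_psum f N (fun i hi => (numParts_spec f hf).2 i (le_trans h hi))

lemma psum_le_size (f : ℕ → ℕ) (hf : IsPartition f) (k : ℕ) : psum f k ≤ size f := by
  rw [size_eq_psum_of_numParts f hf (max k (numParts f)) (le_max_right _ _)]
  exact psum_mono f (le_max_left _ _)

lemma le_psum_of_le_numParts (f : ℕ → ℕ) (hf : IsPartition f) (k : ℕ)
    (h : k ≤ numParts f) : k ≤ psum f k := by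
  calc k = ∑ _i ∈ Finset.range k, 1 := by simp
  _ ≤ psum f k := Finset.sum_le_sum (fun i hi => by
      have := (numParts_spec f hf).1 i (by simp at hi; omega)
      omega)

lemma numParts_le_size (f : ℕ → ℕ) (hf : IsPartition f) : numParts f ≤ size f :=
  le_trans (le_psum_of_le_numParts f hf _ le_rfl) (psum_le_size f hf _)

/-! ### Dominance -/

lemma dom_refl (f : ℕ → ℕ) : Dom f f := ⟨rfl, fun _ => le_rfl⟩

lemma dom_trans {f g h : ℕ → ℕ} (h1 : Dom f g) (h2 : Dom g h) : Dom f h :=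
  ⟨h1.1.trans h2.1, fun k => (h1.2 k).trans (h2.2 k)⟩

lemma dom_antisymm {f g : ℕ → ℕ} (h1 : Dom f g) (h2 : Dom g f) : f = g := by
  have hps : ∀ k, psum f k = psum g k := fun k => le_antisymm (h1.2 k) (h2.2 k)
  funext k
  have e1 := hps k
  have e2 := hps (k + 1)
  rw [psum_succ, psum_succ] at e2
  omega

lemma numParts_le_of_dom {f g : ℕ → ℕ} (hf : IsPartition f) (hg : IsPartition g)
    (h : Dom f g) : numParts g ≤ numParts f := by
  by_contra hc
  set m := numParts g with hm
  have hm1 : 1 ≤ m := by omega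
  have h1 : psum f (m - 1) = size f := by
    rw [size_eq_psum_of_numParts f hf (m - 1) (by omega)]
  have h2 : psum g (m - 1) < size g := by
    have hlt : 0 < g (m - 1) := (numParts_spec g hg).1 (m - 1) (by omega)
    have : psum g m ≤ size g := psum_le_size g hg m
    have : psum g (m - 1) + g (m - 1) ≤ size g := by
      have e : m - 1 + 1 = m := by omega
      have := psum_succ g (m - 1)
      rw [e] at this
      omega
    omega
  have := h.2 (m - 1)
  have hsz := h.1
  omega
/-! ### Multiplicities -/

lemma mult_congr_set {f g : ℕ → ℕ} {p q : ℕ} (h : {i | f i = p} = {i | g i = q}) :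
    mult f p = mult g q := by
  rw [mult, mult, h]

lemma mult_eq_card (f : ℕ → ℕ) (p : ℕ) (N : ℕ) (h : ∀ i, f i = p → i < N) :
    mult f p = ((Finset.range N).filter (fun i => f i = p)).card := by
  rw [mult]
  have hs : {i | f i = p} = ↑((Finset.range N).filter (fun i => f i = p)) := by
    ext i
    simp only [Set.mem_setOf_eq, Finset.coe_filter, Finset.mem_range]
    exact ⟨fun hi => ⟨h i hi, hi⟩, fun hi => hi.2⟩
  rw [hs, Set.ncard_coe_finset]

lemma mult_eq_zero (f : ℕ → ℕ) (p : ℕ) (h : ∀ i, f i ≠ p) : mult f p = 0 := by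
  rw [mult]
  have : {i | f i = p} = ∅ := by ext i; simp [h i]
  simp [this]

lemma exists_of_mult_pos (f : ℕ → ℕ) (p : ℕ) (h : mult f p ≠ 0) : ∃ i, f i = p := by
  by_contra hc
  push_neg at hc
  exact h (mult_eq_zero f p hc)

lemma mult_delCol (f : ℕ → ℕ) (p : ℕ) (hp : 0 < p) :
    mult (delCol f) p = mult f (p + 1) := by
  apply mult_congr_set
  ext i
  simp only [Set.mem_setOf_eq, delCol]
  omega

/-! ### Partial sums as sums over values -/

lemma psum_block (f : ℕ → ℕ) (hf : IsPartition f) (m : ℕ)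
    (hm : ∀ i, i < m ↔ f m < f i) :
    psum f m = ∑ b ∈ Finset.Icc (f m + 1) (f 0), mult f b * b := by
  have key : ∀ b ∈ Finset.Icc (f m + 1) (f 0),
      mult f b = ((Finset.range m).filter (fun i => f i = b)).card := by
    intro b hb
    simp only [Finset.mem_Icc] at hb
    exact mult_eq_card f b m (fun i hi => (hm i).2 (by omega))
  have hmaps : ∀ i ∈ Finset.range m, f i ∈ Finset.Icc (f m + 1) (f 0) := by
    intro i hi
    simp only [Finset.mem_range] at hi
    have h1 : f m < f i := (hm i).1 hi
    have h2 : f i ≤ f 0 := hf.1 (Nat.zero_le i)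
    simp only [Finset.mem_Icc]; omega
  rw [psum]
  rw [← Finset.sum_fiberwise_of_maps_to hmaps f]
  apply Finset.sum_congr rfl
  intro b hb
  rw [key b hb]
  have : ∀ i ∈ (Finset.range m).filter (fun i => f i = b), f i = b := by
    intro i hi
    simp only [Finset.mem_filter] at hi
    exact hi.2
  rw [Finset.sum_congr rfl this, Finset.sum_const, smul_eq_mul]

lemma even_size_of_Cparts (f : ℕ → ℕ) (hf : IsPartition f)
    (hC : ∀ p, Odd p → Even (mult f p)) : Even (size f) := by
  have hz := (numParts_spec f hf).2 (numParts f) le_rfl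
  have hm : ∀ i, i < numParts f ↔ f (numParts f) < f i := by
    intro i
    rw [hz]
    constructor
    · exact (numParts_spec f hf).1 i
    · intro hi
      by_contra hc
      have := (numParts_spec f hf).2 i (by omega)
      omega
  rw [size_eq_psum_of_numParts f hf _ le_rfl, psum_block f hf _ hm]
  apply Finset.even_sum
  intro b _
  rcases Nat.even_or_odd b with hb | hb
  · exact hb.mul_left _
  · exact (hC b hb).mul_right _

/-- `size f = size (delCol f) + numParts f`. -/
lemma psum_delCol (f : ℕ → ℕ) (hf : IsPartition f) (k : ℕ) :
    psum (delCol f) k + min k (numParts f) = psum f k := by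
  induction k with
  | zero => simp [psum]
  | succ k ih =>
    rw [psum_succ, psum_succ]
    rcases lt_or_ge k (numParts f) with h | h
    · have h1 : 0 < f k := (numParts_spec f hf).1 k h
      have h2 : delCol f k = f k - 1 := rfl
      have h3 : min (k+1) (numParts f) = min k (numParts f) + 1 := by omega
      omega
    · have h1 : f k = 0 := (numParts_spec f hf).2 k h
      have h2 : delCol f k = f k - 1 := rfl
      have h3 : min (k+1) (numParts f) = min k (numParts f) := by omega
      omega

lemma delCol_isPartition (f : ℕ → ℕ) (hf : IsPartition f) : IsPartition (delCol f) := by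
  constructor
  · intro i j hij
    have := hf.1 hij
    simp only [delCol]
    omega
  · obtain ⟨N, hN⟩ := hf.2
    exact ⟨N, fun i hi => by simp [delCol, hN i hi]⟩

lemma size_delCol (f : ℕ → ℕ) (hf : IsPartition f) :
    size (delCol f) + numParts f = size f := by
  have h1 := psum_delCol f hf (numParts f)
  rw [min_self] at h1
  rw [size_eq_psum_of_numParts f hf _ le_rfl,
    size_eq_psum (delCol f) (numParts f)
      (fun i hi => by simp [delCol, (numParts_spec f hf).2 i hi])]
  exact h1

/-- Parity: for a partition with the type-B/D parts condition, `numParts ≡ size`. -/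
lemma numParts_parity (f : ℕ → ℕ) (hf : IsPartition f)
    (hB : ∀ p, 0 < p → Even p → Even (mult f p)) :
    ∃ t, size f = 2 * t + numParts f := by
  have hC : ∀ p, Odd p → Even (mult (delCol f) p) := by
    intro p hp
    have hp0 : 0 < p := hp.pos
    rw [mult_delCol f p hp0]
    exact hB (p + 1) (by omega) (by simpa using hp.add_one)
  have hev := even_size_of_Cparts (delCol f) (delCol_isPartition f hf) hC
  obtain ⟨t, ht⟩ := hev
  exact ⟨t, by have := size_delCol f hf; omega⟩
/-! ### Size as a sum over values -/

lemma size_value_sum (f : ℕ → ℕ) (hf : IsPartition f) :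
    size f = ∑ b ∈ Finset.Icc 1 (f 0), mult f b * b := by
  have hz := (numParts_spec f hf).2 (numParts f) le_rfl
  have hm : ∀ i, i < numParts f ↔ f (numParts f) < f i := by
    intro i
    rw [hz]
    constructor
    · exact (numParts_spec f hf).1 i
    · intro hi
      by_contra hc
      have := (numParts_spec f hf).2 i (by omega)
      omega
  rw [size_eq_psum_of_numParts f hf _ le_rfl, psum_block f hf _ hm, hz]

/-- Existence of a maximal bad odd value. -/
lemma bad_value (μ : ℕ → ℕ) (hμ : IsPartition μ) (hsz : Even (size μ))
    (hnc : ¬ ∀ p, Odd p → Even (mult μ p)) :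
    ∃ v, 3 ≤ v ∧ Odd v ∧ Odd (mult μ v) ∧ ∀ p, v < p → Odd p → Even (mult μ p) := by
  push_neg at hnc
  obtain ⟨p0, hp0odd, hp0⟩ := hnc
  rw [Nat.not_even_iff_odd] at hp0
  have hatt : ∀ p, Odd (mult μ p) → p ≤ μ 0 := by
    intro p hp
    have : mult μ p ≠ 0 := by
      intro h; rw [h] at hp; simp [Nat.odd_iff] at hp
    obtain ⟨i, hi⟩ := exists_of_mult_pos μ p this
    exact hi ▸ hμ.1 (Nat.zero_le i)
  set B := (Finset.Icc 1 (μ 0)).filter (fun p => Odd p ∧ Odd (mult μ p)) with hB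
  have hne : B.Nonempty := by
    refine ⟨p0, ?_⟩
    simp only [hB, Finset.mem_filter, Finset.mem_Icc]
    exact ⟨⟨hp0odd.pos, hatt p0 hp0⟩, hp0odd, hp0⟩
  set v := B.max' hne with hv
  have hvB : v ∈ B := B.max'_mem hne
  simp only [hB, Finset.mem_filter, Finset.mem_Icc] at hvB
  obtain ⟨⟨hv1, hvle⟩, hvodd, hvm⟩ := hvB
  have hmax : ∀ p, v < p → Odd p → Even (mult μ p) := by
    intro p hvp hpodd
    rw [← Nat.not_odd_iff_even]
    intro hpm
    have : p ∈ B := by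
      simp only [hB, Finset.mem_filter, Finset.mem_Icc]
      exact ⟨⟨hpodd.pos, hatt p hpm⟩, hpodd, hpm⟩
    have := B.le_max' p this
    omega
  refine ⟨v, ?_, hvodd, hvm, hmax⟩
  -- show 3 ≤ v; if v = 1, the size would be odd
  rcases Nat.lt_or_ge v 3 with hlt | hge
  · exfalso
    have hv1' : v = 1 := by
      rcases Nat.odd_iff.1 hvodd with h; omega
    have hsum := size_value_sum μ hμ
    have h1mem : 1 ∈ Finset.Icc 1 (μ 0) := by
      simp only [Finset.mem_Icc]; omega
    rw [← Finset.sum_erase_add _ _ h1mem] at hsum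
    have heven : Even (∑ b ∈ (Finset.Icc 1 (μ 0)).erase 1, mult μ b * b) := by
      apply Finset.even_sum
      intro b hb
      simp only [Finset.mem_erase, Finset.mem_Icc] at hb
      rcases Nat.even_or_odd b with hbe | hbo
      · exact hbe.mul_left _
      · exact ((hmax b (by omega) hbo)).mul_right _
    have hodd1 : Odd (mult μ 1 * 1) := by
      rw [mul_one, ← hv1']; exact hvm
    have : Odd (size μ) := hsum ▸ heven.add_odd hodd1
    exact (Nat.not_odd_iff_even.2 hsz) this
  · exact hge

/-- A type-C partition has even partial sum at every transition. -/
lemma even_psum_at_transition (c : ℕ → ℕ) (hc : IsPartition c)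
    (hcm : ∀ p, Odd p → Even (mult c p)) (k : ℕ) (hk : 0 < k)
    (htr : c k < c (k - 1)) : Even (psum c k) := by
  have hm : ∀ i, i < k ↔ c k < c i := by
    intro i
    constructor
    · intro hi
      have : c (k - 1) ≤ c i := hc.1 (by omega)
      omega
    · intro hi
      by_contra hik
      have : c i ≤ c k := hc.1 (by omega)
      omega
  rw [psum_block c hc k hm]
  apply Finset.even_sum
  intro b _
  rcases Nat.even_or_odd b with hbe | hbo
  · exact hbe.mul_left _
  · exact (hcm b hbo).mul_right _

/-- The key step of the collapse algorithm. -/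
lemma stepC (μ : ℕ → ℕ) (hμ : IsPartition μ)
    (v : ℕ) (hv3 : 3 ≤ v) (hvodd : Odd v) (hvm : Odd (mult μ v))
    (hvmax : ∀ p, v < p → Odd p → Even (mult μ p)) :
    ∃ μ', IsPartition μ' ∧ size μ' = size μ ∧ (∀ k, psum μ' k ≤ psum μ k) ∧
      (∃ k, k ≤ size μ + 1 ∧ psum μ' k < psum μ k) ∧
      (∀ c, IsTypeC c → Dom c μ → Dom c μ') := by
  obtain ⟨N0, hN0⟩ := hμ.2
  have hvne : mult μ v ≠ 0 := by
    intro h; rw [h] at hvm; simp [Nat.odd_iff] at hvm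
  obtain ⟨i0, hi0⟩ := exists_of_mult_pos μ v hvne
  -- J : first index with value < v
  have hJne : {i | μ i < v}.Nonempty := ⟨N0, by simp [hN0 N0 le_rfl]; omega⟩
  set J := sInf {i | μ i < v} with hJ
  have hJmem : μ J < v := Nat.sInf_mem hJne
  have hJlt : ∀ i, i < J → v ≤ μ i := by
    intro i hi
    have : i ∉ {i | μ i < v} := Nat.notMem_of_lt_sInf hi
    simpa [Nat.not_lt] using this
  have hJ1 : 1 ≤ J := by
    rcases Nat.eq_zero_or_pos J with h | h
    · exfalso
      have : v ≤ μ 0 := hi0 ▸ hμ.1 (Nat.zero_le i0)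
      rw [h] at hJmem; omega
    · exact h
  have hμJ1 : μ (J - 1) = v := by
    have hge : v ≤ μ (J - 1) := hJlt _ (by omega)
    by_contra hne
    have hgt : v + 1 ≤ μ (J - 1) := by omega
    apply hvne
    apply mult_eq_zero
    intro i hi
    rcases Nat.lt_or_ge i J with h | h
    · have : μ (J - 1) ≤ μ i := hμ.1 (by omega)
      omega
    · have : μ i ≤ μ J := hμ.1 h
      omega
  -- R : first index with value < v - 1
  have hRne : {i | μ i < v - 1}.Nonempty := ⟨N0, by simp [hN0 N0 le_rfl]; omega⟩
  set R := sInf {i | μ i < v - 1} with hR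
  have hRmem : μ R < v - 1 := Nat.sInf_mem hRne
  have hRlt : ∀ i, i < R → v - 1 ≤ μ i := by
    intro i hi
    have : i ∉ {i | μ i < v - 1} := Nat.notMem_of_lt_sInf hi
    simpa [Nat.not_lt] using this
  have hJR : J ≤ R := by
    by_contra h
    have := hJlt R (by omega)
    omega
  have hmid : ∀ i, J ≤ i → i < R → μ i = v - 1 := by
    intro i h1 h2
    have hge := hRlt i h2
    have : μ i ≤ μ J := hμ.1 h1
    omega
  -- the new partition
  set μ' : ℕ → ℕ := fun i => if i = J - 1 then v - 1 else if i = R then μ R + 1 else μ i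
    with hμ'
  have hJR' : J - 1 ≠ R := by omega
  have hps : ∀ k, psum μ' k + (if J ≤ k ∧ k ≤ R then 1 else 0) = psum μ k := by
    intro k
    induction k with
    | zero => simp [psum]; omega
    | succ k ih =>
      rw [psum_succ, psum_succ]
      have hRJ : R ≠ J - 1 := fun h => hJR' h.symm
      rcases eq_or_ne k (J - 1) with hk | hk
      · have h1 : μ' k = v - 1 := by simp [hμ', hk]
        have h2 : μ k = v := hk ▸ hμJ1
        have h3 : ¬(J ≤ k ∧ k ≤ R) := by omega
        have h4 : J ≤ k + 1 ∧ k + 1 ≤ R := by omega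
        rw [if_neg h3] at ih
        rw [if_pos h4]
        omega
      rcases eq_or_ne k R with hk2 | hk2
      · have h1 : μ' k = μ R + 1 := by simp [hμ', hk2, hRJ]
        have h2 : μ k = μ R := by rw [hk2]
        have h3 : J ≤ k ∧ k ≤ R := by omega
        have h4 : ¬(J ≤ k + 1 ∧ k + 1 ≤ R) := by omega
        rw [if_pos h3] at ih
        rw [if_neg h4]
        omega
      · have h1 : μ' k = μ k := by simp [hμ', hk, hk2]
        by_cases h3 : J ≤ k ∧ k ≤ R
        · have h4 : J ≤ k + 1 ∧ k + 1 ≤ R := by omega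
          rw [if_pos h3] at ih
          rw [if_pos h4]
          omega
        · have h4 : ¬(J ≤ k + 1 ∧ k + 1 ≤ R) := by omega
          rw [if_neg h3] at ih
          rw [if_neg h4]
          omega
  have hple : ∀ k, psum μ' k ≤ psum μ k := by
    intro k
    have := hps k
    split_ifs at this <;> omega
  have hpart' : IsPartition μ' := by
    constructor
    · apply antitone_nat_of_succ_le
      intro i
      have hRJ : R ≠ J - 1 := fun h => hJR' h.symm
      rcases eq_or_ne (i + 1) (J - 1) with h | h
      · have e1 : μ' (i + 1) = v - 1 := by simp [hμ', h]
        have e2 : μ' i = μ i := by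
          have : i ≠ J - 1 := by omega
          have : i ≠ R := by omega
          simp [hμ', this, ‹i ≠ J - 1›]
        have : μ (J - 1) ≤ μ i := hμ.1 (by omega)
        omega
      rcases eq_or_ne i (J - 1) with h2 | h2
      · have e1 : μ' i = v - 1 := by simp [hμ', h2]
        rcases eq_or_ne (i + 1) R with h3 | h3
        · have e2 : μ' (i + 1) = μ R + 1 := by simp [hμ', h3, hRJ]
          omega
        · have e2 : μ' (i + 1) = μ (i + 1) := by simp [hμ', h, h3]
          have : μ (i + 1) ≤ μ J := hμ.1 (by omega)
          omega
      rcases eq_or_ne i R with h4 | h4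
      · have e1 : μ' i = μ R + 1 := by simp [hμ', h4, hRJ]
        have e2 : μ' (i + 1) = μ (i + 1) := by
          have h6 : i + 1 ≠ R := by omega
          simp [hμ', h, h6]
        have : μ (i + 1) ≤ μ R := hμ.1 (by omega)
        omega
      rcases eq_or_ne (i + 1) R with h5 | h5
      · have e1 : μ' i = μ i := by simp [hμ', h2, h4]
        have e2 : μ' (i + 1) = μ R + 1 := by simp [hμ', h5, hRJ]
        have : μ i = v - 1 := hmid i (by omega) (by omega)
        omega
      · have e1 : μ' i = μ i := by simp [hμ', h2, h4]
        have e2 : μ' (i + 1) = μ (i + 1) := by simp [hμ', h, h5]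
        have : μ (i + 1) ≤ μ i := hμ.1 (by omega)
        omega
    · refine ⟨max N0 (R + 1), fun i hi => ?_⟩
      have h1 : i ≠ J - 1 := by omega
      have h2 : i ≠ R := by omega
      simp only [hμ', h1, h2, if_false]
      exact hN0 i (by omega)
  have hJnum : J ≤ numParts μ := by
    by_contra h
    have := (numParts_spec μ hμ).2 (J - 1) (by omega)
    omega
  have hsize' : size μ' = size μ := by
    set N := numParts μ + R + 2 with hNd
    have hz' : ∀ i, N ≤ i → μ' i = 0 := by
      intro i hi
      have h1 : i ≠ J - 1 := by omega
      have h2 : i ≠ R := by omega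
      simp only [hμ', h1, h2, if_false]
      exact (numParts_spec μ hμ).2 i (by omega)
    rw [size_eq_psum μ' N hz', size_eq_psum μ N
      (fun i hi => (numParts_spec μ hμ).2 i (by omega))]
    have := hps N
    have hcond : ¬(J ≤ N ∧ N ≤ R) := by omega
    simp only [hcond, if_false] at this
    omega
  -- parity of partial sums on the interval
  have hmJ : ∀ i, i < J ↔ μ J < μ i := by
    intro i
    constructor
    · intro hi
      have := hJlt i hi
      omega
    · intro hi
      by_contra hik
      have : μ i ≤ μ J := hμ.1 (by omega)
      omega
  have hoddJ : Odd (psum μ J) := by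
    rw [psum_block μ hμ J hmJ]
    have hvmem : v ∈ Finset.Icc (μ J + 1) (μ 0) := by
      simp only [Finset.mem_Icc]
      have : v ≤ μ 0 := hi0 ▸ hμ.1 (Nat.zero_le i0)
      omega
    rw [← Finset.sum_erase_add _ _ hvmem]
    apply Even.add_odd
    · apply Finset.even_sum
      intro b hb
      simp only [Finset.mem_erase, Finset.mem_Icc] at hb
      obtain ⟨hbne, hb1, hb2⟩ := hb
      rcases Nat.lt_or_ge b v with hbv | hbv
      · have : mult μ b = 0 := by
          apply mult_eq_zero
          intro i hi
          rcases Nat.lt_or_ge i J with h | h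
          · have := hJlt i h; omega
          · have : μ i ≤ μ J := hμ.1 h; omega
        rw [this]; simp
      · rcases Nat.even_or_odd b with hbe | hbo
        · exact hbe.mul_left _
        · exact (hvmax b (by omega) hbo).mul_right _
    · exact hvm.mul hvodd
  have hoddint : ∀ k, J ≤ k → k ≤ R → Odd (psum μ k) := by
    intro k h1 h2
    have hsplit : psum μ J + ∑ i ∈ Finset.Ico J k, μ i = psum μ k := by
      rw [psum, psum, Finset.range_eq_Ico, Finset.range_eq_Ico]
      exact Finset.sum_Ico_consecutive μ (Nat.zero_le J) h1
    have hconst : ∑ i ∈ Finset.Ico J k, μ i = (k - J) * (v - 1) := by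
      rw [Finset.sum_congr rfl (fun i hi => by
        simp only [Finset.mem_Ico] at hi
        exact hmid i hi.1 (by omega))]
      rw [Finset.sum_const, Nat.card_Ico, smul_eq_mul]
    have hev : Even ((k - J) * (v - 1)) := by
      apply Even.mul_left
      rcases Nat.odd_iff.1 hvodd with h
      exact Nat.even_iff.2 (by omega)
    rw [← hsplit, hconst]
    exact hoddJ.add_even hev
  -- maximality transfer
  have hmax : ∀ c, IsTypeC c → Dom c μ → Dom c μ' := by
    rintro c ⟨hcp, hcsz, hcm⟩ ⟨hds, hdp⟩
    have hneq : ∀ k, J ≤ k → k ≤ R → psum c k ≠ psum μ k := by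
      have hRcase : psum c R = psum μ R → False := by
        intro heq
        have hcR : c R ≤ μ R := by
          have e1 := psum_succ c R
          have e2 := psum_succ μ R
          have := hdp (R + 1)
          omega
        have hcR1 : μ (R - 1) ≤ c (R - 1) := by
          have e1 := psum_succ c (R - 1)
          have e2 := psum_succ μ (R - 1)
          have h3 : R - 1 + 1 = R := by omega
          rw [h3] at e1 e2
          have := hdp (R - 1)
          omega
        have hμR1 : v - 1 ≤ μ (R - 1) := by
          rcases Nat.lt_or_ge (R - 1) J with h | h
          · have : R - 1 = J - 1 := by omega
            rw [this, hμJ1]; omega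
          · rw [hmid (R - 1) h (by omega)]
        have htr : c R < c (R - 1) := by omega
        have := even_psum_at_transition c hcp hcm R (by omega) htr
        rw [heq] at this
        exact (Nat.not_odd_iff_even.2 this) (hoddint R hJR le_rfl)
      intro k h1 h2 heq
      -- upward propagation: induction on R - k
      have key : ∀ m k, J ≤ k → k ≤ R → R - k ≤ m → psum c k = psum μ k → False := by
        intro m
        induction m with
        | zero =>
          intro k h1 h2 h3 heq
          have : k = R := by omega
          exact hRcase (this ▸ heq)
        | succ m ih =>
          intro k h1 h2 h3 heq
          rcases eq_or_ne k R with hk | hk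
          · exact hRcase (hk ▸ heq)
          · have hkR : k < R := by omega
            have hck : c k ≤ μ k := by
              have e1 := psum_succ c k
              have e2 := psum_succ μ k
              have := hdp (k + 1)
              omega
            have hμk : μ k = v - 1 := hmid k h1 hkR
            have hck1 : μ (k - 1) ≤ c (k - 1) := by
              have e1 := psum_succ c (k - 1)
              have e2 := psum_succ μ (k - 1)
              have h4 : k - 1 + 1 = k := by omega
              rw [h4] at e1 e2
              have := hdp (k - 1)
              omega
            have hμk1 : v - 1 ≤ μ (k - 1) := by
              rcases Nat.lt_or_ge (k - 1) J with h | h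
              · have : k - 1 = J - 1 := by omega
                rw [this, hμJ1]; omega
              · rw [hmid (k - 1) h (by omega)]
            rcases Nat.lt_or_ge (c k) (v - 1) with hlt | hge
            · have htr : c k < c (k - 1) := by omega
              have := even_psum_at_transition c hcp hcm k (by omega) htr
              rw [heq] at this
              exact (Nat.not_odd_iff_even.2 this) (hoddint k h1 (by omega))
            · have hceq : c k = v - 1 := by omega
              have hnext : psum c (k + 1) = psum μ (k + 1) := by
                have e1 := psum_succ c k
                have e2 := psum_succ μ k
                omega
              exact ih (k + 1) (by omega) (by omega) (by omega) hnext
      exact key (R - k) k h1 h2 le_rfl heq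
    refine ⟨hds.trans hsize'.symm, fun k => ?_⟩
    have h1 := hps k
    by_cases h2 : J ≤ k ∧ k ≤ R
    · have h3 := hneq k h2.1 h2.2
      have h4 := hdp k
      rw [if_pos h2] at h1
      omega
    · rw [if_neg h2] at h1
      have := hdp k
      omega
  refine ⟨μ', hpart', hsize', hple, ⟨J, ?_, ?_⟩, hmax⟩
  · have := numParts_le_size μ hμ
    omega
  · have h1 := hps J
    have h2 : J ≤ J ∧ J ≤ R := ⟨le_rfl, hJR⟩
    rw [if_pos h2] at h1
    omega
/-! ### Existence of the C-collapse -/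

lemma existsC_aux (N : ℕ) : ∀ μ, IsPartition μ → Even (size μ) →
    (∑ k ∈ Finset.range (size μ + 2), psum μ k) ≤ N → ∃ c, IsCollapse IsTypeC μ c := by
  induction N with
  | zero =>
    intro μ hμ hsz hM
    by_cases hC : ∀ p, Odd p → Even (mult μ p)
    · exact ⟨μ, ⟨hμ, hsz, hC⟩, dom_refl μ, fun e _ he => he⟩
    · exfalso
      obtain ⟨v, hv3, hvodd, hvm, hvmax⟩ := bad_value μ hμ hsz hC
      obtain ⟨μ', _, _, hple, ⟨k0, hk0le, hk0lt⟩, _⟩ := stepC μ hμ v hv3 hvodd hvm hvmax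
      have h1 : psum μ' k0 < psum μ k0 := hk0lt
      have h2 : psum μ k0 ≤ ∑ k ∈ Finset.range (size μ + 2), psum μ k := by
        apply Finset.single_le_sum (f := fun k => psum μ k)
        · intro i _; exact Nat.zero_le _
        · simp only [Finset.mem_range]; omega
      omega
  | succ N ih =>
    intro μ hμ hsz hM
    by_cases hC : ∀ p, Odd p → Even (mult μ p)
    · exact ⟨μ, ⟨hμ, hsz, hC⟩, dom_refl μ, fun e _ he => he⟩
    · obtain ⟨v, hv3, hvodd, hvm, hvmax⟩ := bad_value μ hμ hsz hC
      obtain ⟨μ', hp', hs', hple, ⟨k0, hk0le, hk0lt⟩, hmax'⟩ :=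
        stepC μ hμ v hv3 hvodd hvm hvmax
      have hMlt : (∑ k ∈ Finset.range (size μ' + 2), psum μ' k) < 
          ∑ k ∈ Finset.range (size μ + 2), psum μ k := by
        rw [hs']
        apply Finset.sum_lt_sum
        · intro i _; exact hple i
        · exact ⟨k0, by simp only [Finset.mem_range]; omega, hk0lt⟩
      obtain ⟨c, hcC, hcdom, hcmax⟩ := ih μ' hp' (hs' ▸ hsz) (by omega)
      refine ⟨c, hcC, dom_trans hcdom ⟨hs', hple⟩, fun e he hde => ?_⟩
      exact hcmax e he (hmax' e he hde)

lemma existsC (μ : ℕ → ℕ) (hμ : IsPartition μ) (hsz : Even (size μ)) :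
    ∃ c, IsCollapse IsTypeC μ c :=
  existsC_aux _ μ hμ hsz le_rfl

/-! ### Uniqueness and `collapse` -/

lemma collapse_eq_self {T : (ℕ → ℕ) → Prop} {d c : ℕ → ℕ} (h : IsCollapse T d c) :
    collapse T d = c := by
  have hex : ∃ c, IsCollapse T d c := ⟨c, h⟩
  rw [collapse, dif_pos hex]
  have h' := hex.choose_spec
  exact dom_antisymm (h.2.2 _ h'.1 h'.2.1) (h'.2.2 _ h.1 h.2.1)

/-! ### Adding a column -/

def addCol (H : ℕ) (f : ℕ → ℕ) : ℕ → ℕ := fun i => if i < H then f i + 1 else f i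

lemma addCol_isPartition (H : ℕ) (f : ℕ → ℕ) (hf : IsPartition f) :
    IsPartition (addCol H f) := by
  constructor
  · apply antitone_nat_of_succ_le
    intro i
    have h1 : f (i + 1) ≤ f i := hf.1 (by omega)
    simp only [addCol]
    split_ifs with ha hb hb <;> omega
  · obtain ⟨N, hN⟩ := hf.2
    refine ⟨max N H, fun i hi => ?_⟩
    simp only [addCol, if_neg (by omega : ¬ i < H)]
    exact hN i (by omega)

lemma psum_addCol (H : ℕ) (f : ℕ → ℕ) (k : ℕ) :
    psum (addCol H f) k = psum f k + min k H := by
  induction k with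
  | zero => simp [psum]
  | succ k ih =>
    rw [psum_succ, psum_succ, ih]
    simp only [addCol]
    split_ifs with h <;> omega

lemma numParts_addCol (H : ℕ) (f : ℕ → ℕ) (hf : IsPartition f)
    (h : numParts f ≤ H) : numParts (addCol H f) = H := by
  apply numParts_eq
  · intro i hi
    simp only [addCol, if_pos hi]
    omega
  · intro i hi
    simp only [addCol, if_neg (by omega : ¬ i < H)]
    exact (numParts_spec f hf).2 i (by omega)

lemma size_addCol (H : ℕ) (f : ℕ → ℕ) (hf : IsPartition f) :
    size (addCol H f) = size f + H := by
  obtain ⟨N, hN⟩ := hf.2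
  set M := max N H with hM
  have h1 : ∀ i, M ≤ i → addCol H f i = 0 := by
    intro i hi
    simp only [addCol, if_neg (by omega : ¬ i < H)]
    exact hN i (by omega)
  rw [size_eq_psum _ M h1, size_eq_psum f M (fun i hi => hN i (by omega)),
    psum_addCol]
  have : min M H = H := by omega
  omega

lemma mult_addCol_ge (H : ℕ) (f : ℕ → ℕ) (hf : IsPartition f) (hH : numParts f ≤ H)
    (q : ℕ) (hq : 2 ≤ q) : mult (addCol H f) q = mult f (q - 1) := by
  apply mult_congr_set
  ext i
  simp only [Set.mem_setOf_eq, addCol]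
  constructor
  · intro hi
    split_ifs at hi with h
    · omega
    · exfalso
      have := (numParts_spec f hf).2 i (by omega)
      omega
  · intro hi
    have hpos : 0 < f i := by omega
    have hiH : i < H := by
      have := (numParts_spec f hf).1
      by_contra hc
      have := (numParts_spec f hf).2 i (by omega)
      omega
    rw [if_pos hiH]
    omega

lemma mult_addCol_one (H : ℕ) (f : ℕ → ℕ) (hf : IsPartition f) (hH : numParts f ≤ H) :
    mult (addCol H f) 1 = H - numParts f := by
  have hs : {i | addCol H f i = 1} = ↑(Finset.Ico (numParts f) H) := by
    ext i
    simp only [Set.mem_setOf_eq, addCol, Finset.coe_Ico, Set.mem_Ico]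
    constructor
    · intro hi
      split_ifs at hi with h
      · have h0 : f i = 0 := by omega
        have : numParts f ≤ i := by
          by_contra hc
          have := (numParts_spec f hf).1 i (by omega)
          omega
        omega
      · exfalso
        have := (numParts_spec f hf).2 i (by omega)
        omega
    · intro ⟨h1, h2⟩
      rw [if_pos h2, (numParts_spec f hf).2 i h1]
  rw [mult, hs, Set.ncard_coe_finset, Nat.card_Ico]
/-! ### Flat (rectangular) partitions -/

def flatP (c N : ℕ) : ℕ → ℕ := fun i => if i < N then c else 0

lemma flatP_isPartition (c N : ℕ) : IsPartition (flatP c N) := by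
  constructor
  · apply antitone_nat_of_succ_le
    intro i
    simp only [flatP]
    split_ifs <;> omega
  · exact ⟨N, fun i hi => by simp [flatP, Nat.not_lt.2 hi]⟩

lemma psum_flatP (c N k : ℕ) : psum (flatP c N) k = min k N * c := by
  induction k with
  | zero => simp [psum]
  | succ k ih =>
    rw [psum_succ, ih]
    simp only [flatP]
    split_ifs with h
    · have : min (k + 1) N = min k N + 1 := by omega
      rw [this]; ring
    · have : min (k + 1) N = min k N := by omega
      rw [this]; omega

lemma numParts_flatP (c N : ℕ) (hc : 0 < c) : numParts (flatP c N) = N := by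
  apply numParts_eq
  · intro i hi; simp [flatP, hi]; omega
  · intro i hi; simp [flatP, Nat.not_lt.2 hi]

lemma size_flatP (c N : ℕ) : size (flatP c N) = N * c := by
  rw [size_eq_psum (flatP c N) N (fun i hi => by simp [flatP, Nat.not_lt.2 hi]),
    psum_flatP, min_self]

lemma mult_flatP_ne (c N p : ℕ) (h1 : p ≠ c) (h2 : p ≠ 0) : mult (flatP c N) p = 0 := by
  apply mult_eq_zero
  intro i
  simp only [flatP]
  split_ifs <;> omega

lemma mult_flatP_self (c N : ℕ) (hc : 0 < c) : mult (flatP c N) c = N := by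
  have hs : {i | flatP c N i = c} = ↑(Finset.range N) := by
    ext i
    simp only [Set.mem_setOf_eq, flatP, Finset.coe_range, Set.mem_Iio]
    split_ifs with h <;> simp [h] <;> omega
  rw [mult, hs, Set.ncard_coe_finset, Finset.card_range]

lemma min_le_psum (f : ℕ → ℕ) (hf : IsPartition f) (k : ℕ) :
    min k (size f) ≤ psum f k := by
  rcases Nat.lt_or_ge k (numParts f) with h | h
  · have := le_psum_of_le_numParts f hf k (by omega)
    omega
  · rw [← size_eq_psum_of_numParts f hf k h]
    omega

/-! ### Existence of the B-collapse -/

lemma existsB (μ₀ : ℕ → ℕ) (hμ : IsPartition μ₀) (hsz : Odd (size μ₀)) :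
    ∃ β, IsCollapse IsTypeB μ₀ β := by
  set H := size μ₀ with hHdef
  have hH1 : 1 ≤ H := hsz.pos
  have hnp : numParts μ₀ ≤ H := numParts_le_size μ₀ hμ
  set ν := addCol H μ₀ with hν
  have hνp : IsPartition ν := addCol_isPartition H μ₀ hμ
  have hνsz : size ν = H + H := size_addCol H μ₀ hμ
  obtain ⟨γ, hγC, hγdom, hγmax⟩ := existsC ν hνp (by rw [hνsz]; exact ⟨H, rfl⟩)
  have hγp : IsPartition γ := hγC.1
  have hγsz : size γ = H + H := hγdom.1.trans hνsz
  have hνnum : numParts ν = H := numParts_addCol H μ₀ hμ hnp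
  have hge : H ≤ numParts γ := by
    have := numParts_le_of_dom hγp hνp hγdom
    omega
  -- the rectangle 2^H is type C and dominated by ν
  have hwC : IsTypeC (flatP 2 H) := by
    refine ⟨flatP_isPartition 2 H, ?_, ?_⟩
    · rw [size_flatP]; exact ⟨H, by ring⟩
    · intro p hp
      have h1 : p ≠ 2 := by rintro rfl; simp [Nat.odd_iff] at hp
      have h2 : p ≠ 0 := by rintro rfl; simp [Nat.odd_iff] at hp
      rw [mult_flatP_ne 2 H p h1 h2]
      exact Even.zero
  have hwdom : Dom (flatP 2 H) ν := by
    constructor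
    · rw [size_flatP, hνsz]; ring
    · intro k
      rw [psum_flatP, psum_addCol]
      have := min_le_psum μ₀ hμ k
      rw [← hHdef] at this
      omega
  have hle : numParts γ ≤ H := by
    have h1 := hγmax _ hwC hwdom
    have := numParts_le_of_dom (flatP_isPartition 2 H) hγp h1
    rw [numParts_flatP 2 H (by omega)] at this
    exact this
  have hγH : numParts γ = H := le_antisymm hle hge
  set β := delCol γ with hβ
  have hβp : IsPartition β := delCol_isPartition γ hγp
  have hβsz : size β = H := by
    have := size_delCol γ hγp
    rw [← hβ, hγH, hγsz] at this
    omega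
  have hpsβ : ∀ k, psum β k + min k H = psum γ k := by
    intro k
    have := psum_delCol γ hγp k
    rw [← hβ, hγH] at this
    exact this
  refine ⟨β, ⟨hβp, by rw [hβsz]; exact hsz, ?_⟩, ⟨hβsz, ?_⟩, ?_⟩
  · -- B parts condition
    intro p hp hpe
    have h1 : mult β p = mult γ (p + 1) := mult_delCol γ p hp
    rw [h1]
    exact hγC.2.2 (p + 1) (Even.add_one hpe)
  · -- dominance over μ₀
    intro k
    have h1 := hpsβ k
    have h2 := hγdom.2 k
    rw [psum_addCol] at h2
    omega
  · -- maximality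
    rintro b ⟨hbp, hbsz, hbB⟩ ⟨hbs, hbd⟩
    have hbH : size b = H := hbs
    have hbnp : numParts b ≤ H := hbH ▸ numParts_le_size b hbp
    have hbodd : ∃ t, size b = 2 * t + numParts b := numParts_parity b hbp hbB
    have haC : IsTypeC (addCol H b) := by
      refine ⟨addCol_isPartition H b hbp, ?_, ?_⟩
      · rw [size_addCol H b hbp, hbH]; exact ⟨H, rfl⟩
      · intro q hq
        rcases eq_or_ne q 1 with h1 | h1
        · rw [h1, mult_addCol_one H b hbp hbnp]
          obtain ⟨t, ht⟩ := hbodd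
          obtain ⟨s, hs⟩ := hsz
          rw [Nat.even_iff]
          omega
        · have h2 : 2 ≤ q := by
            have := hq.pos
            omega
          rw [mult_addCol_ge H b hbp hbnp q h2]
          apply hbB
          · have := hq.pos; omega
          · obtain ⟨s, hs⟩ := hq
            have : Even (q - 1) := ⟨s, by omega⟩
            exact this
    have hadom : Dom (addCol H b) ν := by
      constructor
      · rw [size_addCol H b hbp, hνsz, hbH]
      · intro k
        rw [psum_addCol, psum_addCol]
        have := hbd k
        omega
    have h3 := hγmax _ haC hadom
    constructor
    · rw [hbH, hβsz]
    · intro k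
      have h4 := h3.2 k
      rw [psum_addCol] at h4
      have h5 := hpsβ k
      omega
/-! ### `boxPlus` and `boxMinus` -/

lemma boxPlus_isPartition (f : ℕ → ℕ) (hf : IsPartition f) : IsPartition (boxPlus f) := by
  constructor
  · apply antitone_nat_of_succ_le
    intro i
    have h1 : f (i + 1) ≤ f i := hf.1 (by omega)
    have h0 : f 1 ≤ f 0 := hf.1 (by omega)
    rcases Nat.eq_zero_or_pos i with rfl | hi
    · have e1 : boxPlus f (0 + 1) = f 1 := by simp [boxPlus]
      have e2 : boxPlus f 0 = f 0 + 1 := by simp [boxPlus]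
      rw [e1, e2]
      omega
    · simp only [boxPlus, if_neg (by omega : ¬ i + 1 = 0), if_neg (by omega : ¬ i = 0)]
      exact h1
  · obtain ⟨N, hN⟩ := hf.2
    refine ⟨N + 1, fun i hi => ?_⟩
    simp only [boxPlus, if_neg (by omega : ¬ i = 0)]
    exact hN i (by omega)

lemma psum_boxPlus (f : ℕ → ℕ) (k : ℕ) : psum (boxPlus f) k = psum f k + min k 1 := by
  induction k with
  | zero => simp [psum]
  | succ k ih =>
    rw [psum_succ, psum_succ, ih]
    simp only [boxPlus]
    split_ifs with h
    · subst h; omega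
    · omega

lemma size_boxPlus (f : ℕ → ℕ) (hf : IsPartition f) : size (boxPlus f) = size f + 1 := by
  obtain ⟨N, hN⟩ := hf.2
  have hz : ∀ i, N + 1 ≤ i → boxPlus f i = 0 := by
    intro i hi
    simp only [boxPlus, if_neg (by omega : ¬ i = 0)]
    exact hN i (by omega)
  rw [size_eq_psum _ (N + 1) hz, size_eq_psum f (N + 1) (fun i hi => hN i (by omega)),
    psum_boxPlus]
  omega

lemma boxMinus_isPartition (f : ℕ → ℕ) (hf : IsPartition f) : IsPartition (boxMinus f) := by
  constructor
  · apply antitone_nat_of_succ_le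
    intro i
    have h1 : f (i + 1) ≤ f i := hf.1 (by omega)
    simp only [boxMinus]
    split_ifs with h2 h3 h3
    · omega
    · -- i + 1 = numParts f - 1, i ≠ numParts f - 1
      omega
    · -- i = numParts f - 1 : then f (i+1) = 0
      have h4 : numParts f ≤ i + 1 := by omega
      have := (numParts_spec f hf).2 (i + 1) h4
      omega
    · omega
  · obtain ⟨N, hN⟩ := hf.2
    refine ⟨N + numParts f + 1, fun i hi => ?_⟩
    simp only [boxMinus]
    have := hN i (by omega)
    split_ifs <;> omega

lemma psum_boxMinus (f : ℕ → ℕ) (hf : IsPartition f) (h1 : 1 ≤ numParts f) (k : ℕ) :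
    psum (boxMinus f) k + (if numParts f ≤ k then 1 else 0) = psum f k := by
  have hfpos : 1 ≤ f (numParts f - 1) := (numParts_spec f hf).1 _ (by omega)
  induction k with
  | zero =>
    simp only [psum, Finset.range_zero, Finset.sum_empty]
    rw [if_neg (by omega : ¬ numParts f ≤ 0)]
    omega
  | succ k ih =>
    rw [psum_succ, psum_succ]
    rcases eq_or_ne k (numParts f - 1) with hk | hk
    · have e1 : boxMinus f k = f k - 1 := by simp [boxMinus, hk]
      have e2 : ¬ numParts f ≤ k := by omega
      have e3 : numParts f ≤ k + 1 := by omega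
      rw [if_neg e2] at ih
      rw [if_pos e3]
      have : f k = f (numParts f - 1) := by rw [hk]
      omega
    · have e1 : boxMinus f k = f k := by simp [boxMinus, hk]
      by_cases e2 : numParts f ≤ k
      · rw [if_pos e2] at ih
        rw [if_pos (by omega)]
        omega
      · rw [if_neg e2] at ih
        rw [if_neg (by omega : ¬ numParts f ≤ k + 1)]
        omega

lemma size_boxMinus (f : ℕ → ℕ) (hf : IsPartition f) (h1 : 1 ≤ numParts f) :
    size (boxMinus f) + 1 = size f := by
  obtain ⟨N, hN⟩ := hf.2
  set M := N + numParts f + 1 with hM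
  have hz : ∀ i, M ≤ i → boxMinus f i = 0 := by
    intro i hi
    have := hN i (by omega)
    simp only [boxMinus]
    split_ifs <;> omega
  rw [size_eq_psum _ M hz, size_eq_psum f M (fun i hi => hN i (by omega))]
  have := psum_boxMinus f hf h1 M
  rw [if_pos (by have := numParts_le f hf N hN; omega)] at this
  omega
/-! ### The main argument -/

lemma main_aux (a n : ℕ) (han : n ≤ a) (d β g : ℕ → ℕ)
    (hdC : IsTypeC d) (hsize : size d = 2 * n + 2 * a) (hparts : numParts d = 2 * a)
    (hβ : IsCollapse IsTypeB (boxPlus d) β)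
    (hg : IsCollapse IsTypeC (boxMinus (boxPlus (delCol d))) g) :
    numParts β = 2 * a + 1 ∧ delCol β = g := by
  obtain ⟨hdp, hdsz, hdm⟩ := hdC
  have hdz : ∀ i, 2 * a ≤ i → d i = 0 := fun i hi =>
    (numParts_spec d hdp).2 i (by rw [hparts]; omega)
  have hdpos : ∀ i, i < 2 * a → 0 < d i := fun i hi =>
    (numParts_spec d hdp).1 i (by rw [hparts]; omega)
  -- E := delCol d
  have hEp : IsPartition (delCol d) := delCol_isPartition d hdp
  have hEsz : size (delCol d) = 2 * n := by
    have := size_delCol d hdp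
    rw [hparts] at this
    omega
  have hEz : ∀ i, 2 * a ≤ i → delCol d i = 0 := fun i hi => by
    simp [delCol, hdz i hi]
  -- F := boxPlus (delCol d)
  have hFp : IsPartition (boxPlus (delCol d)) := boxPlus_isPartition _ hEp
  have hFsz : size (boxPlus (delCol d)) = 2 * n + 1 := by
    rw [size_boxPlus _ hEp, hEsz]
  have hFz : ∀ i, 2 * a + 1 ≤ i → boxPlus (delCol d) i = 0 := by
    intro i hi
    simp only [boxPlus, if_neg (by omega : ¬ i = 0)]
    exact hEz i (by omega)
  have hp1 : 1 ≤ numParts (boxPlus (delCol d)) := by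
    by_contra h
    have := (numParts_spec _ hFp).2 0 (by omega)
    simp [boxPlus] at this
  have hp2a : numParts (boxPlus (delCol d)) ≤ 2 * a + 1 := numParts_le _ hFp _ hFz
  -- M := boxMinus (boxPlus (delCol d))
  have hMp : IsPartition (boxMinus (boxPlus (delCol d))) := boxMinus_isPartition _ hFp
  have hMsz : size (boxMinus (boxPlus (delCol d))) = 2 * n := by
    have := size_boxMinus _ hFp hp1
    omega
  have hMz : ∀ i, numParts (boxPlus (delCol d)) ≤ i →
      boxMinus (boxPlus (delCol d)) i = 0 := by
    intro i hi
    have h0 := (numParts_spec _ hFp).2 i hi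
    simp only [boxMinus]
    split_ifs <;> omega
  have hpsM := psum_boxMinus _ hFp hp1
  have hpsF := psum_boxPlus (delCol d)
  have hpsE : ∀ k, psum (delCol d) k + min k (2 * a) = psum d k := by
    intro k
    have := psum_delCol d hdp k
    rw [hparts] at this
    exact this
  -- D := boxPlus d
  have hDp : IsPartition (boxPlus d) := boxPlus_isPartition d hdp
  have hDsz : size (boxPlus d) = 2 * n + 2 * a + 1 := by
    rw [size_boxPlus d hdp, hsize]
  have hpsD := psum_boxPlus d
  have hDz : ∀ i, 2 * a + 1 ≤ i → boxPlus d i = 0 := by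
    intro i hi
    simp only [boxPlus, if_neg (by omega : ¬ i = 0)]
    exact hdz i (by omega)
  have hDnum_le : numParts (boxPlus d) ≤ 2 * a + 1 := numParts_le _ hDp _ hDz
  have hDnum_ge : 2 * a ≤ numParts (boxPlus d) := by
    by_contra h
    push_neg at h
    have h0 := (numParts_spec _ hDp).2 (2 * a - 1) (by omega)
    have h1 : 0 < d (2 * a - 1) := hdpos _ (by omega)
    by_cases h2 : (2 * a - 1) = 0
    · rw [h2] at h0
      simp [boxPlus] at h0
    · rw [show boxPlus d (2 * a - 1) = d (2 * a - 1) from by simp [boxPlus, h2]] at h0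
      omega
  -- facts about g
  have hgp : IsPartition g := hg.1.1
  have hgsz : size g = 2 * n := hg.2.1.1.trans hMsz
  have hgnum : numParts g ≤ 2 * n := by
    have hoC : IsTypeC (flatP 1 (2 * n)) := by
      refine ⟨flatP_isPartition _ _, ?_, ?_⟩
      · rw [size_flatP]; exact ⟨n, by ring⟩
      · intro p hp
        rcases eq_or_ne p 1 with rfl | h
        · rw [mult_flatP_self 1 (2 * n) one_pos]; exact ⟨n, by ring⟩
        · rw [mult_flatP_ne 1 (2 * n) p h (by have := hp.pos; omega)]
          exact Even.zero
    have hodom : Dom (flatP 1 (2 * n)) (boxMinus (boxPlus (delCol d))) := by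
      refine ⟨by rw [size_flatP, hMsz]; ring, ?_⟩
      intro k
      rw [psum_flatP]
      have := min_le_psum _ hMp k
      rw [hMsz] at this
      omega
    have h1 := hg.2.2 _ hoC hodom
    have h2 := numParts_le_of_dom (flatP_isPartition _ _) hgp h1
    rw [numParts_flatP 1 (2 * n) one_pos] at h2
    exact h2
  have hgnum' : numParts g ≤ 2 * a + 1 := by omega
  -- c := addCol (2a+1) g
  have hcp : IsPartition (addCol (2 * a + 1) g) := addCol_isPartition _ _ hgp
  have hcsz : size (addCol (2 * a + 1) g) = 2 * n + (2 * a + 1) := by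
    rw [size_addCol _ _ hgp, hgsz]
  have hcB : IsTypeB (addCol (2 * a + 1) g) := by
    refine ⟨hcp, by rw [hcsz]; exact ⟨n + a, by ring⟩, ?_⟩
    intro q hq hqe
    have h2 : 2 ≤ q := by
      rcases hqe with ⟨r, hr⟩; omega
    rw [mult_addCol_ge _ _ hgp hgnum' q h2]
    refine hg.1.2.2 (q - 1) ?_
    rw [Nat.odd_iff]
    rw [Nat.even_iff] at hqe
    omega
  have hczero : ∀ i, 2 * a + 1 ≤ i → addCol (2 * a + 1) g i = 0 := by
    intro i hi
    simp only [addCol, if_neg (by omega : ¬ i < 2 * a + 1)]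
    exact (numParts_spec g hgp).2 i (by omega)
  have hcdom : Dom (addCol (2 * a + 1) g) (boxPlus d) := by
    refine ⟨by rw [hcsz, hDsz]; ring, ?_⟩
    intro k
    rcases Nat.lt_or_ge k (2 * a + 1) with hk | hk
    · have h1 := psum_addCol (2 * a + 1) g k
      have h2 := hg.2.1.2 k
      have h3 := hpsM k
      have h4 := hpsF k
      have h5 := hpsE k
      have h6 := hpsD k
      split_ifs at h3 <;> omega
    · have h1 : psum (addCol (2 * a + 1) g) k = size (addCol (2 * a + 1) g) :=
        (size_eq_psum _ k (fun i hi => hczero i (by omega))).symm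
      have h2 : psum (boxPlus d) k = size (boxPlus d) :=
        (size_eq_psum _ k (fun i hi => hDz i (by omega))).symm
      rw [h1, h2, hcsz, hDsz]
      omega
  have hcnum : numParts (addCol (2 * a + 1) g) = 2 * a + 1 :=
    numParts_addCol _ _ hgp hgnum'
  -- facts about β
  have hβp : IsPartition β := hβ.1.1
  have hβdomD : Dom β (boxPlus d) := hβ.2.1
  have hβsz : size β = 2 * n + 2 * a + 1 := hβdomD.1.trans hDsz
  have hcβ : Dom (addCol (2 * a + 1) g) β := hβ.2.2 _ hcB hcdom
  have hβnum_le : numParts β ≤ 2 * a + 1 := by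
    have := numParts_le_of_dom hcp hβp hcβ
    omega
  have hβnum_ge : 2 * a ≤ numParts β := by
    have := numParts_le_of_dom hβp hDp hβdomD
    omega
  have hβnum : numParts β = 2 * a + 1 := by
    obtain ⟨t, ht⟩ := numParts_parity β hβp hβ.1.2.2
    omega
  -- key counting estimate
  have hd1 : ∀ i, numParts (boxPlus (delCol d)) ≤ i → i < 2 * a → d i = 1 := by
    intro i h1 h2
    have hFzi : boxPlus (delCol d) i = 0 := (numParts_spec _ hFp).2 i h1
    have hi0 : i ≠ 0 := by
      intro h
      rw [h] at hFzi
      simp [boxPlus] at hFzi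
    rw [show boxPlus (delCol d) i = delCol d i from by simp [boxPlus, hi0]] at hFzi
    have := hdpos i h2
    simp only [delCol] at hFzi
    omega
  have hkey : ∀ k, numParts (boxPlus (delCol d)) ≤ k → k ≤ 2 * a →
      psum β k ≤ psum d k := by
    intro k h1 h2
    have hda : psum d k + (2 * a - k) = psum d (2 * a) := by
      have hsplit : psum d k + ∑ i ∈ Finset.Ico k (2 * a), d i = psum d (2 * a) := by
        rw [psum, psum, Finset.range_eq_Ico, Finset.range_eq_Ico]
        exact Finset.sum_Ico_consecutive d (Nat.zero_le k) h2
      have hone : ∑ i ∈ Finset.Ico k (2 * a), d i = 2 * a - k := by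
        rw [Finset.sum_congr rfl (fun i hi => by
          simp only [Finset.mem_Ico] at hi
          exact hd1 i (by omega) hi.2)]
        simp [Nat.card_Ico]
      omega
    have hdfull : size d = psum d (2 * a) :=
      size_eq_psum_of_numParts d hdp _ (by rw [hparts])
    have hβsplit : psum β k + ∑ i ∈ Finset.Ico k (2 * a + 1), β i = psum β (2 * a + 1) := by
      rw [psum, psum, Finset.range_eq_Ico, Finset.range_eq_Ico]
      exact Finset.sum_Ico_consecutive β (Nat.zero_le k) (by omega)
    have hβone : 2 * a + 1 - k ≤ ∑ i ∈ Finset.Ico k (2 * a + 1), β i := by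
      calc 2 * a + 1 - k = ∑ _i ∈ Finset.Ico k (2 * a + 1), 1 := by
            simp [Nat.card_Ico]
      _ ≤ ∑ i ∈ Finset.Ico k (2 * a + 1), β i := Finset.sum_le_sum (fun i hi => by
            simp only [Finset.mem_Ico] at hi
            exact (numParts_spec β hβp).1 i (by omega))
    have hβfull : psum β (2 * a + 1) ≤ size β := psum_le_size β hβp _
    omega
  -- γ := delCol β
  have hγp : IsPartition (delCol β) := delCol_isPartition β hβp
  have hpsγ : ∀ k, psum (delCol β) k + min k (2 * a + 1) = psum β k := by
    intro k
    have := psum_delCol β hβp k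
    rw [hβnum] at this
    exact this
  have hγsz : size (delCol β) = 2 * n := by
    have := size_delCol β hβp
    rw [hβnum] at this
    omega
  have hγC : IsTypeC (delCol β) := by
    refine ⟨hγp, by rw [hγsz]; exact ⟨n, by ring⟩, ?_⟩
    intro q hq
    rw [mult_delCol β q hq.pos]
    refine hβ.1.2.2 (q + 1) (by omega) ?_
    rw [Nat.even_iff]
    rw [Nat.odd_iff] at hq
    omega
  have hγdomM : Dom (delCol β) (boxMinus (boxPlus (delCol d))) := by
    refine ⟨by rw [hγsz, hMsz], ?_⟩
    intro k
    rcases Nat.lt_or_ge k (numParts (boxPlus (delCol d))) with hk | hk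
    · have h1 := hpsγ k
      have h2 := hβdomD.2 k
      have h3 := hpsD k
      have h4 := hpsM k
      rw [if_neg (by omega)] at h4
      have h5 := hpsF k
      have h6 := hpsE k
      omega
    rcases Nat.lt_or_ge k (2 * a + 1) with hk2 | hk2
    · have h1 := hpsγ k
      have h2 := hkey k hk (by omega)
      have h4 := hpsM k
      rw [if_pos hk] at h4
      have h5 := hpsF k
      have h6 := hpsE k
      omega
    · have h1 : psum (boxMinus (boxPlus (delCol d))) k =
          size (boxMinus (boxPlus (delCol d))) :=
        (size_eq_psum _ k (fun i hi => hMz i (by omega))).symm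
      have h2 := psum_le_size (delCol β) hγp k
      rw [h1, hMsz]
      omega
  have hγg : Dom (delCol β) g := hg.2.2 _ hγC hγdomM
  have hgγ : Dom g (delCol β) := by
    refine ⟨by rw [hgsz, hγsz], ?_⟩
    intro k
    have h1 := psum_addCol (2 * a + 1) g k
    have h2 := hcβ.2 k
    have h3 := hpsγ k
    omega
  exact ⟨hβnum, dom_antisymm hγg hgγ⟩
/-- for integers `a ≥ n ≥ 0` and a type-C partition `d` of size
`2n+2a` with exactly `2a` parts: (i) `∇(d)` is a type-D partition of size `2n`;
(ii) the B-collapse of `d⁺` has exactly `2a+1` parts; (iii) `∇(B-collapse of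
d⁺)` equals the C-collapse of `((∇(d))⁺)⁻`. -/
theorem stmt_14 (a n : ℕ) (han : n ≤ a) (d : ℕ → ℕ)
    (hd : IsTypeC d) (hsize : size d = 2 * n + 2 * a) (hparts : numParts d = 2 * a) :
    (IsTypeD (delCol d) ∧ size (delCol d) = 2 * n) ∧
    numParts (collapseB (boxPlus d)) = 2 * a + 1 ∧
    delCol (collapseB (boxPlus d)) = collapseC (boxMinus (boxPlus (delCol d))) := by
  obtain ⟨hdp, hdsz, hdm⟩ := hd
  -- part (i)
  have hEp : IsPartition (delCol d) := delCol_isPartition d hdp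
  have hEsz : size (delCol d) = 2 * n := by
    have := size_delCol d hdp
    rw [hparts] at this
    omega
  have hi : IsTypeD (delCol d) ∧ size (delCol d) = 2 * n := by
    refine ⟨⟨hEp, by rw [hEsz]; exact ⟨n, by ring⟩, ?_⟩, hEsz⟩
    intro p hp hpe
    rw [mult_delCol d p hp]
    exact hdm (p + 1) (Even.add_one hpe)
  -- existence of the two collapses
  have hDp : IsPartition (boxPlus d) := boxPlus_isPartition d hdp
  have hDsz : size (boxPlus d) = 2 * n + 2 * a + 1 := by
    rw [size_boxPlus d hdp, hsize]
  obtain ⟨β, hβ⟩ := existsB (boxPlus d) hDp (by rw [hDsz]; exact ⟨n + a, by ring⟩)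
  have hFp : IsPartition (boxPlus (delCol d)) := boxPlus_isPartition _ hEp
  have hFsz : size (boxPlus (delCol d)) = 2 * n + 1 := by
    rw [size_boxPlus _ hEp, hEsz]
  have hp1 : 1 ≤ numParts (boxPlus (delCol d)) := by
    by_contra h
    have := (numParts_spec _ hFp).2 0 (by omega)
    simp [boxPlus] at this
  have hMp : IsPartition (boxMinus (boxPlus (delCol d))) := boxMinus_isPartition _ hFp
  have hMsz : size (boxMinus (boxPlus (delCol d))) = 2 * n := by
    have := size_boxMinus _ hFp hp1
    omega
  obtain ⟨g, hg⟩ := existsC (boxMinus (boxPlus (delCol d))) hMp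
    (by rw [hMsz]; exact ⟨n, by ring⟩)
  obtain ⟨h1, h2⟩ := main_aux a n han d β g ⟨hdp, hdsz, hdm⟩ hsize hparts hβ hg
  have hcolB : collapseB (boxPlus d) = β := collapse_eq_self hβ
  have hcolC : collapseC (boxMinus (boxPlus (delCol d))) = g := collapse_eq_self hg
  refine ⟨hi, ?_, ?_⟩
  · rw [hcolB]; exact h1
  · rw [hcolB, hcolC]; exact h2
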